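/- An operation C : 2^L → 2^L is a C-logics if and only if it satisfies Inclusion and 2-Loop: for all A, B ⊆ L, if A ⊆ C(B) and B ⊆ C(A), then C(A) = C(B). -/
import Mathlib


/-- An operation `C : 2^L → 2^L` is a C-logics (Inclusion + Cumulativity) iff it satisfies
Inclusion and 2-Loop. -/
theorem stmt_1 {L : Type*} [Nonempty L] (C : Set L → Set L) :
    ((∀ A : Set L, A ⊆ C A) ∧
      (∀ A B : Set L, A ⊆ B → B ⊆ C A → C A = C B)) ↔
    ((∀ A : Set L, A ⊆ C A) ∧
      (∀ A B : Set L, A ⊆ C B → B ⊆ C A → C A = C B)) := by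
  constructor
  · rintro ⟨hinc, hcum⟩
    refine ⟨hinc, fun A B hAB hBA => ?_⟩
    have h1 : C A = C (A ∪ B) :=
      hcum A (A ∪ B) Set.subset_union_left (Set.union_subset (hinc A) hBA)
    have h2 : C B = C (A ∪ B) := by
      have := hcum B (A ∪ B) Set.subset_union_right (Set.union_subset hAB (hinc B))
      rw [this, Set.union_comm]
    rw [h1, h2]
  · rintro ⟨hinc, hloop⟩
    exact ⟨hinc, fun A B hAB hBA =>
      hloop A B (hAB.trans (hinc B)) hBA⟩
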